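/- Let f₁, f₂ ∈ H be unit vectors and let μ₁ := μ_{f₁} and μ₂ := μ_{f₂} be the associated measures, with isometries V_{f₁} : L²(μ₁) → H and V_{f₂} : L²(μ₂) → H. Suppose μ₁ is absolutely continuous with respect to μ₂, and let h := dμ₁/dμ₂ be the Radon–Nikodym derivative. Then U : L²(μ₁) → L²(μ₂) defined by U ψ := √h · ψ is a linear isometry, and the operator W := V_{f₂} ∘ U ∘ V_{f₁}^* : H → H (where V_{f₁}^* denotes the Hilbert-space adjoint of V_{f₁}) commutes with ρ(ψ) for every ψ ∈ C(X, ℂ). -/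

import Mathlib

open MeasureTheory ContinuousLinearMap
open scoped InnerProductSpace

open scoped ENNReal

namespace Stmt11Aux

variable {X : Type*} [TopologicalSpace X] [CompactSpace X] [T2Space X]
  [MeasurableSpace X] [BorelSpace X]
variable {μ : Measure X} [IsFiniteMeasure μ]

lemma memℒp_mul (ψ : C(X, ℂ)) (g : Lp ℂ 2 μ) :
    MemLp (fun x => ψ x * (g : X → ℂ) x) 2 μ := by
  refine MemLp.of_le_mul (c := ‖ψ‖) (Lp.memLp g)
    ((ψ.continuous.aestronglyMeasurable).mul (Lp.aestronglyMeasurable g)) ?_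
  filter_upwards with x
  rw [norm_mul]
  gcongr
  exact ψ.norm_coe_le_norm x

noncomputable def mulCLM (ψ : C(X, ℂ)) : Lp ℂ 2 μ →L[ℂ] Lp ℂ 2 μ :=
  LinearMap.mkContinuous
    { toFun := fun g => (memℒp_mul ψ g).toLp _
      map_add' := fun g₁ g₂ => by
        apply Lp.ext
        filter_upwards [MemLp.coeFn_toLp (memℒp_mul ψ (g₁ + g₂)),
          MemLp.coeFn_toLp (memℒp_mul ψ g₁), MemLp.coeFn_toLp (memℒp_mul ψ g₂),
          Lp.coeFn_add g₁ g₂,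
          Lp.coeFn_add ((memℒp_mul ψ g₁).toLp _) ((memℒp_mul ψ g₂).toLp _)]
          with x h1 h2 h3 h4 h5
        simp only [h1, h2, h3, h4, h5, Pi.add_apply, mul_add]
      map_smul' := fun c g => by
        apply Lp.ext
        filter_upwards [MemLp.coeFn_toLp (memℒp_mul ψ (c • g)),
          MemLp.coeFn_toLp (memℒp_mul ψ g), Lp.coeFn_smul c g,
          Lp.coeFn_smul c ((memℒp_mul ψ g).toLp _)] with x h1 h2 h3 h4
        simp only [h1, h2, h3, h4, Pi.smul_apply, smul_eq_mul, RingHom.id_apply]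
        ring }
    ‖ψ‖ (fun g => by
      have hb : ∀ᵐ x ∂μ,
          ‖(((memℒp_mul ψ g).toLp (fun x => ψ x * (g : X → ℂ) x)) : X → ℂ) x‖
            ≤ ‖ψ‖ * ‖(g : X → ℂ) x‖ := by
        filter_upwards [MemLp.coeFn_toLp (memℒp_mul ψ g)] with x h1
        rw [h1, norm_mul]
        gcongr
        exact ψ.norm_coe_le_norm x
      exact Lp.norm_le_mul_norm_of_ae_le_mul hb)

lemma coeFn_mulCLM (ψ : C(X, ℂ)) (g : Lp ℂ 2 μ) :
    (mulCLM ψ g : X → ℂ) =ᵐ[μ] fun x => ψ x * (g : X → ℂ) x :=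
  MemLp.coeFn_toLp (memℒp_mul ψ g)

lemma intertwine {H : Type*} [NormedAddCommGroup H] [InnerProductSpace ℂ H] [CompleteSpace H]
    (ρ : C(X, ℂ) →⋆ₐ[ℂ] (H →L[ℂ] H)) (f : H) [μ.WeaklyRegular]
    (V : Lp ℂ 2 μ →ₗᵢ[ℂ] H)
    (hV : ∀ (ψ : C(X, ℂ)) (g : Lp ℂ 2 μ), (g : X → ℂ) =ᵐ[μ] (ψ : X → ℂ) → V g = ρ ψ f)
    (ψ : C(X, ℂ)) (g : Lp ℂ 2 μ) : V (mulCLM ψ g) = ρ ψ (V g) := by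
  have hd : DenseRange (ContinuousMap.toLp (E := ℂ) 2 μ ℂ) :=
    ContinuousMap.toLp_denseRange (E := ℂ) (𝕜 := ℂ) (μ := μ) (p := 2) (by norm_num)
  have key : (fun g : Lp ℂ 2 μ => V (mulCLM ψ g)) = fun g => ρ ψ (V g) := by
    refine hd.equalizer (V.continuous.comp (mulCLM ψ).continuous)
      ((ρ ψ).continuous.comp V.continuous) ?_
    funext φ
    simp only [Function.comp_apply]
    have h1 : V (mulCLM ψ (ContinuousMap.toLp 2 μ ℂ φ)) = ρ (ψ * φ) f := by
      refine hV (ψ * φ) _ ?_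
      filter_upwards [coeFn_mulCLM ψ (ContinuousMap.toLp 2 μ ℂ φ),
        ContinuousMap.coeFn_toLp (p := 2) (𝕜 := ℂ) μ φ] with x hx hy
      rw [hx, hy]
      rfl
    have h2 : V (ContinuousMap.toLp 2 μ ℂ φ) = ρ φ f :=
      hV φ _ (ContinuousMap.coeFn_toLp (p := 2) (𝕜 := ℂ) μ φ)
    rw [h1, h2, map_mul]
    rfl
  exact congrFun key g

lemma inner_mulCLM (ψ : C(X, ℂ)) (u g : Lp ℂ 2 μ) :
    ⟪mulCLM ψ u, g⟫_ℂ = ⟪u, mulCLM (star ψ) g⟫_ℂ := by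
  rw [L2.inner_def, L2.inner_def]
  refine integral_congr_ae ?_
  filter_upwards [coeFn_mulCLM ψ u, coeFn_mulCLM (star ψ) g] with x h1 h2
  simp only [h1, h2, RCLike.inner_apply, ContinuousMap.star_apply, RCLike.star_def, map_mul]
  ring

lemma adjoint_intertwine {H : Type*} [NormedAddCommGroup H] [InnerProductSpace ℂ H]
    [CompleteSpace H]
    (ρ : C(X, ℂ) →⋆ₐ[ℂ] (H →L[ℂ] H)) (f : H) [μ.WeaklyRegular]
    (V : Lp ℂ 2 μ →ₗᵢ[ℂ] H)
    (hV : ∀ (ψ : C(X, ℂ)) (g : Lp ℂ 2 μ), (g : X → ℂ) =ᵐ[μ] (ψ : X → ℂ) → V g = ρ ψ f)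
    (ψ : C(X, ℂ)) (y : H) :
    adjoint V.toContinuousLinearMap (ρ ψ y)
      = mulCLM ψ (adjoint V.toContinuousLinearMap y) := by
  refine ext_inner_right ℂ fun g => ?_
  rw [adjoint_inner_left]
  have hψ : ρ ψ = adjoint (ρ (star ψ)) := by
    rw [map_star, star_eq_adjoint, adjoint_adjoint]
  rw [hψ, adjoint_inner_left]
  rw [show V.toContinuousLinearMap g = V g from rfl,
    ← intertwine ρ f V hV (star ψ) g,
    show V (mulCLM (star ψ) g) = V.toContinuousLinearMap (mulCLM (star ψ) g) from rfl,
    ← adjoint_inner_left]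
  exact (inner_mulCLM ψ _ g).symm

/-! ### Measure-change part -/

variable (μ₁ μ₂ : Measure X)

noncomputable def sq (x : X) : ℂ :=
  (Real.sqrt ((μ₁.rnDeriv μ₂ x).toReal) : ℂ)

variable {μ₁ μ₂}

lemma measurable_sq : Measurable (sq μ₁ μ₂) :=
  Complex.measurable_ofReal.comp
    ((Measure.measurable_rnDeriv μ₁ μ₂).ennreal_toReal.sqrt)

lemma ae_sq_mul [Measure.HaveLebesgueDecomposition μ₁ μ₂] (habs : μ₁ ≪ μ₂) {u v : X → ℂ}
    (huv : u =ᵐ[μ₁] v) :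
    (fun x => sq μ₁ μ₂ x * u x) =ᵐ[μ₂] fun x => sq μ₁ μ₂ x * v x := by
  have h : ∀ᵐ x ∂(μ₂.withDensity (μ₁.rnDeriv μ₂)), u x = v x := by
    rw [Measure.withDensity_rnDeriv_eq μ₁ μ₂ habs]; exact huv
  rw [ae_withDensity_iff (Measure.measurable_rnDeriv μ₁ μ₂)] at h
  filter_upwards [h] with x hx
  by_cases h0 : μ₁.rnDeriv μ₂ x = 0
  · simp [sq, h0]
  · rw [hx h0]

lemma lintegral_sq [IsFiniteMeasure μ₁] [IsFiniteMeasure μ₂] (habs : μ₁ ≪ μ₂) {v : X → ℂ}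
    (hv : Measurable v) :
    ∫⁻ x, (‖sq μ₁ μ₂ x * v x‖₊ : ℝ≥0∞) ^ (2 : ℝ) ∂μ₂
      = ∫⁻ x, (‖v x‖₊ : ℝ≥0∞) ^ (2 : ℝ) ∂μ₁ := by
  have hrn := Measure.measurable_rnDeriv μ₁ μ₂
  conv_rhs => rw [← Measure.withDensity_rnDeriv_eq μ₁ μ₂ habs]
  rw [lintegral_withDensity_eq_lintegral_mul₀ hrn.aemeasurable
    ((hv.nnnorm.coe_nnreal_ennreal).pow_const (2 : ℝ)).aemeasurable]
  refine lintegral_congr_ae ?_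
  filter_upwards [Measure.rnDeriv_lt_top μ₁ μ₂] with x hx
  set t := (μ₁.rnDeriv μ₂ x).toReal with htdef
  have ht0 : 0 ≤ t := ENNReal.toReal_nonneg
  have h1 : ‖sq μ₁ μ₂ x * v x‖₊ = Real.toNNReal (Real.sqrt t) * ‖v x‖₊ := by
    rw [nnnorm_mul]
    congr 1
    refine NNReal.coe_injective ?_
    rw [coe_nnnorm, Real.coe_toNNReal _ (Real.sqrt_nonneg t), sq, Complex.norm_real,
      Real.norm_eq_abs, abs_of_nonneg (Real.sqrt_nonneg t)]
  have h2 : ((Real.toNNReal (Real.sqrt t) : ℝ≥0∞)) ^ (2 : ℝ) = μ₁.rnDeriv μ₂ x := by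
    rw [← ENNReal.ofReal, ENNReal.ofReal_rpow_of_nonneg (Real.sqrt_nonneg t) (by norm_num),
      Real.rpow_two, Real.sq_sqrt ht0, htdef, ENNReal.ofReal_toReal hx.ne]
  rw [h1, ENNReal.coe_mul, ENNReal.mul_rpow_of_nonneg _ _ (by norm_num : (0:ℝ) ≤ 2), h2]
  rfl

variable [IsFiniteMeasure μ₁] [IsFiniteMeasure μ₂]

lemma eLpNorm_sq_mul (habs : μ₁ ≪ μ₂) (g : Lp ℂ 2 μ₁) :
    eLpNorm (fun x => sq μ₁ μ₂ x * (g : X → ℂ) x) 2 μ₂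
      = eLpNorm ((g : X → ℂ)) 2 μ₁ := by
  have ham : AEMeasurable (g : X → ℂ) μ₁ := (Lp.aestronglyMeasurable g).aemeasurable
  have h1 : eLpNorm (fun x => sq μ₁ μ₂ x * (g : X → ℂ) x) 2 μ₂
      = eLpNorm (fun x => sq μ₁ μ₂ x * ham.mk _ x) 2 μ₂ :=
    eLpNorm_congr_ae (ae_sq_mul habs ham.ae_eq_mk)
  have h2 : eLpNorm ((g : X → ℂ)) 2 μ₁ = eLpNorm (ham.mk _) 2 μ₁ :=
    eLpNorm_congr_ae ham.ae_eq_mk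
  rw [h1, h2, eLpNorm_eq_lintegral_rpow_enorm_toReal two_ne_zero ENNReal.ofNat_ne_top,
    eLpNorm_eq_lintegral_rpow_enorm_toReal two_ne_zero ENNReal.ofNat_ne_top]
  simp only [ENNReal.toReal_ofNat]
  have h := lintegral_sq habs ham.measurable_mk
  simp only [ENNReal.rpow_two] at h ⊢
  exact congrArg (· ^ (1 / 2 : ℝ)) h

lemma memℒp_sq_mul (habs : μ₁ ≪ μ₂) (g : Lp ℂ 2 μ₁) :
    MemLp (fun x => sq μ₁ μ₂ x * (g : X → ℂ) x) 2 μ₂ := by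
  have ham : AEMeasurable (g : X → ℂ) μ₁ := (Lp.aestronglyMeasurable g).aemeasurable
  constructor
  · exact ((measurable_sq.mul ham.measurable_mk).aestronglyMeasurable).congr
      (ae_sq_mul habs ham.ae_eq_mk).symm
  · rw [eLpNorm_sq_mul habs g]
    exact (Lp.memLp g).2

noncomputable def Umap (habs : μ₁ ≪ μ₂) : Lp ℂ 2 μ₁ →ₗᵢ[ℂ] Lp ℂ 2 μ₂ where
  toLinearMap :=
    { toFun := fun g => (memℒp_sq_mul habs g).toLp _
      map_add' := fun g₁ g₂ => by
        apply Lp.ext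
        filter_upwards [MemLp.coeFn_toLp (memℒp_sq_mul habs (g₁ + g₂)),
          MemLp.coeFn_toLp (memℒp_sq_mul habs g₁), MemLp.coeFn_toLp (memℒp_sq_mul habs g₂),
          Lp.coeFn_add ((memℒp_sq_mul habs g₁).toLp _) ((memℒp_sq_mul habs g₂).toLp _),
          ae_sq_mul habs (Lp.coeFn_add g₁ g₂)] with x h1 h2 h3 h4 h5
        simp only [h1, h5, h4, h2, h3, Pi.add_apply, mul_add]
      map_smul' := fun c g => by
        apply Lp.ext
        filter_upwards [MemLp.coeFn_toLp (memℒp_sq_mul habs (c • g)),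
          MemLp.coeFn_toLp (memℒp_sq_mul habs g),
          Lp.coeFn_smul c ((memℒp_sq_mul habs g).toLp _),
          ae_sq_mul habs (Lp.coeFn_smul c g)] with x h1 h2 h3 h4
        simp only [h1, h4, h3, h2, Pi.smul_apply, smul_eq_mul, RingHom.id_apply]
        ring }
  norm_map' := fun g => by
    simp only [LinearMap.coe_mk, AddHom.coe_mk]
    rw [Lp.norm_def, Lp.norm_def, eLpNorm_congr_ae (MemLp.coeFn_toLp (memℒp_sq_mul habs g)),
      eLpNorm_sq_mul habs g]

lemma coeFn_Umap (habs : μ₁ ≪ μ₂) (g : Lp ℂ 2 μ₁) :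
    (Umap habs g : X → ℂ) =ᵐ[μ₂] fun x => sq μ₁ μ₂ x * (g : X → ℂ) x :=
  MemLp.coeFn_toLp (memℒp_sq_mul habs g)

lemma Umap_mulCLM (habs : μ₁ ≪ μ₂) (ψ : C(X, ℂ)) (g : Lp ℂ 2 μ₁) :
    Umap habs (mulCLM ψ g) = mulCLM ψ (Umap habs g) := by
  apply Lp.ext
  filter_upwards [coeFn_Umap habs (mulCLM ψ g), ae_sq_mul habs (coeFn_mulCLM ψ g),
    coeFn_mulCLM ψ (Umap habs g), coeFn_Umap habs g] with x h1 h2 h3 h4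
  rw [h1, h2, h3, h4]
  ring

end Stmt11Aux

open Stmt11Aux


/-- Lemma 3.1(b): with `μ₁ = μ_{f₁} ≪ μ₂ = μ_{f₂}` and `h = dμ₁/dμ₂`, the map
`U ψ = √h ψ` is an isometry `L²(μ₁) → L²(μ₂)`, and `W = V_{f₂} U V_{f₁}^*` commutes with
every `ρ(ψ)`. -/
theorem stmt_11 {H : Type*} [NormedAddCommGroup H] [InnerProductSpace ℂ H]
    [CompleteSpace H]
    {X : Type*} [TopologicalSpace X] [CompactSpace X] [T2Space X]
    [MeasurableSpace X] [BorelSpace X]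
    (ρ : C(X, ℂ) →⋆ₐ[ℂ] (H →L[ℂ] H))
    (f₁ f₂ : H) (hf₁ : ‖f₁‖ = 1) (hf₂ : ‖f₂‖ = 1)
    (μ₁ μ₂ : Measure X)
    (hμ₁reg : μ₁.Regular) (hμ₁prob : IsProbabilityMeasure μ₁)
    (hμ₁ : ∀ ψ : C(X, ℂ), ∫ x, ψ x ∂μ₁ = ⟪f₁, ρ ψ f₁⟫_ℂ)
    (hμ₂reg : μ₂.Regular) (hμ₂prob : IsProbabilityMeasure μ₂)
    (hμ₂ : ∀ ψ : C(X, ℂ), ∫ x, ψ x ∂μ₂ = ⟪f₂, ρ ψ f₂⟫_ℂ)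
    (V₁ : Lp ℂ 2 μ₁ →ₗᵢ[ℂ] H)
    (hV₁ : ∀ (ψ : C(X, ℂ)) (g : Lp ℂ 2 μ₁),
      (g : X → ℂ) =ᵐ[μ₁] (ψ : X → ℂ) → V₁ g = ρ ψ f₁)
    (V₂ : Lp ℂ 2 μ₂ →ₗᵢ[ℂ] H)
    (hV₂ : ∀ (ψ : C(X, ℂ)) (g : Lp ℂ 2 μ₂),
      (g : X → ℂ) =ᵐ[μ₂] (ψ : X → ℂ) → V₂ g = ρ ψ f₂)
    (habs : μ₁ ≪ μ₂) :
    ∃ U : Lp ℂ 2 μ₁ →ₗᵢ[ℂ] Lp ℂ 2 μ₂,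
      (∀ g : Lp ℂ 2 μ₁,
        (U g : X → ℂ) =ᵐ[μ₂]
          fun x => (Real.sqrt ((μ₁.rnDeriv μ₂ x).toReal) : ℂ) * (g : X → ℂ) x) ∧
      ∀ ψ : C(X, ℂ),
        (V₂.toContinuousLinearMap ∘L U.toContinuousLinearMap ∘L
            adjoint V₁.toContinuousLinearMap) ∘L ρ ψ =
          ρ ψ ∘L (V₂.toContinuousLinearMap ∘L U.toContinuousLinearMap ∘L
            adjoint V₁.toContinuousLinearMap) := by
  
  haveI := hμ₁prob; haveI := hμ₂prob; haveI := hμ₁reg; haveI := hμ₂reg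
  refine ⟨Umap habs, fun g => coeFn_Umap habs g, fun ψ => ?_⟩
  ext y
  simp only [comp_apply, LinearIsometry.coe_toContinuousLinearMap]
  rw [adjoint_intertwine ρ f₁ V₁ hV₁ ψ y, Umap_mulCLM habs ψ _,
    intertwine ρ f₂ V₂ hV₂ ψ _]
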